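/- Under separability of X w.r.t. C*, hierarchical agglomerative clustering with complete linkage recovers C*: every merge performed while more than K subsets exist joins two subsets lying in the same ground-truth cluster, and the partition into K subsets equals C*. -/

import Mathlib

open scoped Classical

inductive CTree (α : Type*) where
  | leaf (x : α) : CTree α
  | node (l r : CTree α) : CTree α

namespace CTree

variable {α : Type*}

/-- The set of data points (descendant leaves) of a node. -/
noncomputable def lvs : CTree α → Finset α
  | leaf x => {x}
  | node l r => lvs l ∪ lvs r

theorem lvs_nonempty (t : CTree α) : t.lvs.Nonempty := by
  induction t with
  | leaf x => exact ⟨x, by simp [lvs]⟩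
  | node l r ihl ihr => exact ihl.mono (by simp [lvs])

/-- `Sub s t` : `s` is a subtree (node) of `t`. -/
inductive Sub : CTree α → CTree α → Prop
  | refl (t : CTree α) : Sub t t
  | left {s l r : CTree α} : Sub s l → Sub s (node l r)
  | right {s l r : CTree α} : Sub s r → Sub s (node l r)

/-- Least common ancestor (as a subtree) of two data points. -/
noncomputable def lca : CTree α → α → α → CTree α
  | leaf a, _, _ => leaf a
  | node l r, x, y =>
      if x ∈ lvs l ∧ y ∈ lvs l then lca l x y
      else if x ∈ lvs r ∧ y ∈ lvs r then lca r x y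
      else node l r

/-- Dendrogram purity 1: for every same-cluster pair, all leaves below their
least common ancestor belong to that cluster. -/
def PurityOne (C : α → ℕ) (t : CTree α) : Prop :=
  ∀ x ∈ t.lvs, ∀ y ∈ t.lvs, x ≠ y → C x = C y → ∀ z ∈ (t.lca x y).lvs, C z = C x

/-- A dataset `X` is separable w.r.t. a ground-truth clustering `C`:
every within-cluster distance is strictly smaller than every between-cluster distance. -/
def Separable [MetricSpace α] (X : Finset α) (C : α → ℕ) : Prop :=
  ∀ x ∈ X, ∀ y ∈ X, ∀ x' ∈ X, ∀ y' ∈ X,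
    x ≠ y → C x = C y → C x' ≠ C y' → dist x y < dist x' y'

/-- A node `v` with sibling `v'` and aunt `a` is masked if some `x ∈ lvs v` is farther
from some point of `v'` than from some point of `a`
(i.e. `max_{y ∈ lvs v'} ‖x-y‖ > min_{z ∈ lvs a} ‖x-z‖`). -/
def Masked [MetricSpace α] (v v' a : CTree α) : Prop :=
  ∃ x ∈ v.lvs,
    (a.lvs.inf' (lvs_nonempty a) fun z => dist x z) <
      (v'.lvs.sup' (lvs_nonempty v') fun y => dist x y)

end CTree

abbrev Euc (d : ℕ) := EuclideanSpace ℝ (Fin d)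

/-- One merge step of hierarchical agglomerative clustering with linkage `link`:
two distinct current subsets minimizing the linkage over all current pairs are merged. -/
inductive HACStep {α : Type*} (link : Finset α → Finset α → ℝ) :
    Finset (Finset α) → Finset (Finset α) → Prop
  | merge (P : Finset (Finset α)) (A B : Finset α)
      (hA : A ∈ P) (hB : B ∈ P) (hne : A ≠ B)
      (hmin : ∀ A' ∈ P, ∀ B' ∈ P, A' ≠ B' → link A B ≤ link A' B') :
      HACStep link P (insert (A ∪ B) ((P.erase A).erase B))

/-- Single linkage: minimum pairwise distance between the two subsets. -/
noncomputable def singleLink {α : Type*} [MetricSpace α] (A B : Finset α) : ℝ :=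
  sInf (Set.image2 dist (↑A : Set α) (↑B : Set α))

/-- Complete linkage: maximum pairwise distance between the two subsets. -/
noncomputable def completeLink {α : Type*} [MetricSpace α] (A B : Finset α) : ℝ :=
  sSup (Set.image2 dist (↑A : Set α) (↑B : Set α))

/-- Average linkage: average pairwise distance between the two subsets. -/
noncomputable def averageLink {α : Type*} [MetricSpace α] (A B : Finset α) : ℝ :=
  (∑ a ∈ A, ∑ b ∈ B, dist a b) / ((A.card : ℝ) * (B.card : ℝ))


section Aux

attribute [-instance] WithLp.instDecidableEq

lemma dist_le_completeLink {α : Type*} [MetricSpace α] {A B : Finset α} {a b : α}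
    (ha : a ∈ A) (hb : b ∈ B) : dist a b ≤ completeLink A B :=
  le_csSup ((A.finite_toSet.image2 _ B.finite_toSet).bddAbove)
    (Set.mem_image2_of_mem ha hb)

lemma completeLink_lt {α : Type*} [MetricSpace α] {A B : Finset α}
    (hA : A.Nonempty) (hB : B.Nonempty) {r : ℝ}
    (h : ∀ a ∈ A, ∀ b ∈ B, dist a b < r) : completeLink A B < r := by
  have hfin : (Set.image2 dist (↑A : Set α) ↑B).Finite :=
    A.finite_toSet.image2 _ B.finite_toSet
  have hne : (Set.image2 dist (↑A : Set α) ↑B).Nonempty :=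
    Set.Nonempty.image2 (by exact_mod_cast hA) (by exact_mod_cast hB)
  have hmem := hne.csSup_mem hfin
  obtain ⟨a, ha, b, hb, heq⟩ := hmem
  rw [completeLink, ← heq]
  exact h a ha b hb

/-- Invariant maintained by complete-linkage HAC under separability. -/
def HACInv {d : ℕ} (X : Finset (Euc d)) (C : Euc d → ℕ)
    (P : Finset (Finset (Euc d))) : Prop :=
  (∀ A ∈ P, A.Nonempty) ∧ (∀ A ∈ P, A ⊆ X) ∧
  (∀ A ∈ P, ∀ B ∈ P, A ≠ B → Disjoint A B) ∧
  (∀ x ∈ X, ∃ A ∈ P, x ∈ A) ∧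
  ((X.image C).card ≤ P.card → ∀ A ∈ P, ∀ a ∈ A, ∀ b ∈ A, C a = C b)

noncomputable def clusterOf {d : ℕ} (C : Euc d → ℕ) (A : Finset (Euc d)) : ℕ :=
  if h : A.Nonempty then C h.choose else 0

lemma clusterOf_eq {d : ℕ} (C : Euc d → ℕ) {A : Finset (Euc d)}
    (hpure : ∀ a ∈ A, ∀ b ∈ A, C a = C b) {a : Euc d} (ha : a ∈ A) :
    clusterOf C A = C a := by
  have hA : A.Nonempty := ⟨a, ha⟩
  rw [clusterOf, dif_pos hA]
  exact hpure hA.choose hA.choose_spec a ha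

open CTree in
lemma inv_step {d : ℕ} {X : Finset (Euc d)} {C : Euc d → ℕ} (hsep : Separable X C)
    {P P' : Finset (Finset (Euc d))} (h : HACStep completeLink P P')
    (hI : HACInv X C P) : HACInv X C P' := by
  obtain ⟨hne', hsub, hdisj, hcov, hpure⟩ := hI
  cases h with
  | merge A B hA hB hAB hmin =>
  have hmem' : ∀ S ∈ insert (A ∪ B) ((P.erase A).erase B),
      S = A ∪ B ∨ (S ∈ P ∧ S ≠ A ∧ S ≠ B) := by
    intro S hS
    rcases Finset.mem_insert.1 hS with hS | hS
    · exact Or.inl hS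
    · right
      simp only [Finset.mem_erase] at hS
      exact ⟨hS.2.2, hS.2.1, hS.1⟩
  have hAne : A.Nonempty := hne' A hA
  have hBne : B.Nonempty := hne' B hB
  -- the union is not among the remaining sets
  have hUnotin : A ∪ B ∉ (P.erase A).erase B := by
    intro hU
    simp only [Finset.mem_erase] at hU
    have hdis := hdisj (A ∪ B) hU.2.2 A hA hU.2.1
    have := disjoint_self.1 (Finset.disjoint_union_left.1 hdis).1
    exact hAne.ne_empty this
  have hcard' : (insert (A ∪ B) ((P.erase A).erase B)).card = P.card - 1 := by
    rw [Finset.card_insert_of_notMem hUnotin,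
      Finset.card_erase_of_mem (Finset.mem_erase.2 ⟨Ne.symm hAB, hB⟩),
      Finset.card_erase_of_mem hA]
    have h2 : 2 ≤ P.card := Finset.one_lt_card.2 ⟨A, hA, B, hB, hAB⟩
    omega
  refine ⟨?_, ?_, ?_, ?_, ?_⟩
  · intro S hS
    rcases hmem' S hS with rfl | ⟨hS, _, _⟩
    · exact hAne.mono Finset.subset_union_left
    · exact hne' S hS
  · intro S hS
    rcases hmem' S hS with rfl | ⟨hS, _, _⟩
    · exact Finset.union_subset (hsub A hA) (hsub B hB)
    · exact hsub S hS
  · intro S hS T hT hST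
    rcases hmem' S hS with rfl | ⟨hS, hSA, hSB⟩ <;>
      rcases hmem' T hT with rfl | ⟨hT, hTA, hTB⟩
    · exact absurd rfl hST
    · exact Finset.disjoint_union_left.2
        ⟨hdisj A hA T hT (fun e => hTA e.symm), hdisj B hB T hT (fun e => hTB e.symm)⟩
    · exact Finset.disjoint_union_right.2 ⟨hdisj S hS A hA hSA, hdisj S hS B hB hSB⟩
    · exact hdisj S hS T hT hST
  · intro x hx
    obtain ⟨S, hS, hxS⟩ := hcov x hx
    by_cases hSA : S = A
    · exact ⟨A ∪ B, Finset.mem_insert_self _ _, Finset.mem_union_left _ (hSA ▸ hxS)⟩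
    by_cases hSB : S = B
    · exact ⟨A ∪ B, Finset.mem_insert_self _ _, Finset.mem_union_right _ (hSB ▸ hxS)⟩
    · exact ⟨S, Finset.mem_insert_of_mem (Finset.mem_erase.2
        ⟨hSB, Finset.mem_erase.2 ⟨hSA, hS⟩⟩), hxS⟩
  · intro hK
    rw [hcard'] at hK
    have h2 : 2 ≤ P.card := Finset.one_lt_card.2 ⟨A, hA, B, hB, hAB⟩
    have hKP : (X.image C).card < P.card := by omega
    have hpureP := hpure (le_of_lt hKP)
    -- pigeonhole: two distinct sets in P with the same cluster value
    obtain ⟨A₀, hA₀, B₀, hB₀, hne₀, hcl₀⟩ :=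
      Finset.exists_ne_map_eq_of_card_lt_of_maps_to hKP
        (fun S hS => by
          have hSne := hne' S hS
          refine Finset.mem_image.2 ⟨hSne.choose, hsub S hS hSne.choose_spec, ?_⟩
          exact (clusterOf_eq C (hpureP S hS) hSne.choose_spec).symm)
    -- the merged pair lies in a common cluster
    have hkey : ∀ a ∈ A, ∀ b ∈ B, C a = C b := by
      by_contra hcon
      push_neg at hcon
      obtain ⟨a, haA, b, hbB, hab⟩ := hcon
      have h1 : completeLink A B ≤ completeLink A₀ B₀ := hmin A₀ hA₀ B₀ hB₀ hne₀
      have h2 : completeLink A₀ B₀ < dist a b := by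
        refine completeLink_lt (hne' A₀ hA₀) (hne' B₀ hB₀) ?_
        intro x hx y hy
        have hxy : x ≠ y := by
          intro e
          subst e
          exact Finset.disjoint_left.1 (hdisj A₀ hA₀ B₀ hB₀ hne₀) hx hy
        have hCxy : C x = C y := by
          rw [← clusterOf_eq C (hpureP A₀ hA₀) hx, ← clusterOf_eq C (hpureP B₀ hB₀) hy, hcl₀]
        exact hsep x (hsub A₀ hA₀ hx) y (hsub B₀ hB₀ hy)
          a (hsub A hA haA) b (hsub B hB hbB) hxy hCxy hab
      exact absurd (h1.trans_lt h2) (not_lt.2 (dist_le_completeLink haA hbB))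
    intro S hS s hs t ht
    rcases hmem' S hS with rfl | ⟨hS, _, _⟩
    · rcases Finset.mem_union.1 hs with hs | hs <;> rcases Finset.mem_union.1 ht with ht | ht
      · exact hpureP A hA s hs t ht
      · exact hkey s hs t ht
      · exact (hkey t ht s hs).symm
      · exact hpureP B hB s hs t ht
    · exact hpureP S hS s hs t ht

end Aux

open CTree in
/-- under separability, hierarchical agglomerative clustering with
complete linkage only merges subsets lying in a common ground-truth cluster while more
than `K` subsets remain, so every reachable partition with at least `K` subsets is
cluster-pure, and the reachable partition with exactly `K` subsets is exactly the
ground-truth clustering. -/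
theorem complete_linkage_recovers_ground_truth {d : ℕ} (X : Finset (Euc d))
    (C : Euc d → ℕ) (hsep : Separable X C) :
    (∀ P, Relation.ReflTransGen (HACStep (completeLink))
        (X.image fun x => ({x} : Finset (Euc d))) P →
      (X.image C).card ≤ P.card → ∀ A ∈ P, ∀ a ∈ A, ∀ b ∈ A, C a = C b) ∧
    (∀ P, Relation.ReflTransGen (HACStep (completeLink))
        (X.image fun x => ({x} : Finset (Euc d))) P →
      P.card = (X.image C).card →
      P = X.image fun x => X.filter fun y => C y = C x) := by
  have hbase : HACInv X C (X.image fun x => ({x} : Finset (Euc d))) := by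
    refine ⟨?_, ?_, ?_, ?_, ?_⟩
    · intro A hA
      obtain ⟨x, _, rfl⟩ := Finset.mem_image.1 hA
      exact ⟨x, Finset.mem_singleton_self x⟩
    · intro A hA
      obtain ⟨x, hx, rfl⟩ := Finset.mem_image.1 hA
      exact Finset.singleton_subset_iff.2 hx
    · intro A hA B hB hne
      obtain ⟨x, _, rfl⟩ := Finset.mem_image.1 hA
      obtain ⟨y, _, rfl⟩ := Finset.mem_image.1 hB
      exact Finset.disjoint_singleton.2 fun e => hne (by rw [e])
    · intro x hx
      exact ⟨{x}, Finset.mem_image_of_mem _ hx, Finset.mem_singleton_self x⟩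
    · intro _ A hA a ha b hb
      obtain ⟨x, _, rfl⟩ := Finset.mem_image.1 hA
      rw [Finset.mem_singleton.1 ha, Finset.mem_singleton.1 hb]
  have hinv : ∀ P, Relation.ReflTransGen (HACStep completeLink)
      (X.image fun x => ({x} : Finset (Euc d))) P → HACInv X C P := by
    intro P hP
    induction hP with
    | refl => exact hbase
    | tail h₁ h₂ ih => exact inv_step hsep h₂ ih
  constructor
  · intro P hP hKP
    exact (hinv P hP).2.2.2.2 hKP
  · intro P hP hcard
    obtain ⟨hne', hsub, hdisj, hcov, hpure⟩ := hinv P hP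
    have hpureP := hpure (le_of_eq hcard.symm)
    have hmapsto : ∀ S ∈ P, clusterOf C S ∈ X.image C := fun S hS => by
      have hSne := hne' S hS
      exact Finset.mem_image.2 ⟨hSne.choose, hsub S hS hSne.choose_spec,
        (clusterOf_eq C (hpureP S hS) hSne.choose_spec).symm⟩
    have hsurj : X.image C ⊆ P.image (clusterOf C) := by
      intro c hc
      obtain ⟨x, hx, rfl⟩ := Finset.mem_image.1 hc
      obtain ⟨S, hS, hxS⟩ := hcov x hx
      exact Finset.mem_image.2 ⟨S, hS, clusterOf_eq C (hpureP S hS) hxS⟩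
    have himg : P.image (clusterOf C) = X.image C :=
      Finset.Subset.antisymm
        (fun c hc => by
          obtain ⟨S, hS, rfl⟩ := Finset.mem_image.1 hc
          exact hmapsto S hS) hsurj
    have hinj : Set.InjOn (clusterOf C) P := by
      apply Finset.injOn_of_card_image_eq
      rw [himg, hcard]
    have hset : ∀ S ∈ P, ∀ a ∈ S, S = X.filter fun y => C y = C a := by
      intro S hS a ha
      apply Finset.Subset.antisymm
      · intro s hs
        exact Finset.mem_filter.2 ⟨hsub S hS hs, hpureP S hS s hs a ha⟩
      · intro y hy
        obtain ⟨hyX, hCy⟩ := Finset.mem_filter.1 hy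
        obtain ⟨T, hT, hyT⟩ := hcov y hyX
        have heq : clusterOf C T = clusterOf C S := by
          rw [clusterOf_eq C (hpureP T hT) hyT, clusterOf_eq C (hpureP S hS) ha, hCy]
        exact (hinj hT hS heq) ▸ hyT
    ext S
    constructor
    · intro hS
      have hSne := hne' S hS
      exact Finset.mem_image.2 ⟨hSne.choose, hsub S hS hSne.choose_spec,
        (hset S hS hSne.choose hSne.choose_spec).symm⟩
    · intro hS
      obtain ⟨x, hx, rfl⟩ := Finset.mem_image.1 hS
      obtain ⟨T, hT, hxT⟩ := hcov x hx
      rw [← hset T hT x hxT]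
      exact hT
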